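/- Pointwise, for all r₀, r₁ ≥ 0: (√r₀ − √r₁)² ≤ H_KL(r₀, r₁), where H_KL(r₀,r₁) = r₀(ln r₀ − ln r₁) + r₁ − r₀ for r₀,r₁ > 0, H_KL(0,r₁) = r₁, and H_KL(r₀,0) = +∞ for r₀ > 0. -/

import Mathlib

open scoped ENNReal

/-- The 1-homogeneous perspective function of the entropy `E₁(r) = r ln r − r + 1`:
`H_KL(r₀,r₁) = r₀(ln r₀ − ln r₁) + r₁ − r₀` for `r₀,r₁>0`, `H_KL(0,r₁)=r₁`,
`H_KL(r₀,0)=∞` for `r₀>0`. -/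
noncomputable def HKL (r s : ℝ) : ℝ≥0∞ :=
  if r = 0 then ENNReal.ofReal s
  else if s = 0 then ⊤
  else ENNReal.ofReal (r * (Real.log r - Real.log s) + s - r)

/-- Pointwise Hellinger–KL inequality: `(√r₀ − √r₁)² ≤ H_KL(r₀, r₁)`. -/
theorem sq_sqrt_sub_le_HKL (r₀ r₁ : ℝ) (h₀ : 0 ≤ r₀) (h₁ : 0 ≤ r₁) :
    ENNReal.ofReal ((Real.sqrt r₀ - Real.sqrt r₁) ^ 2) ≤ HKL r₀ r₁ := by
  unfold HKL
  rcases eq_or_lt_of_le h₀ with h₀' | h₀'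
  · simp [← h₀', Real.sq_sqrt h₁]
  rcases eq_or_lt_of_le h₁ with h₁' | h₁'
  · simp [← h₁', h₀'.ne']
  rw [if_neg h₀'.ne', if_neg h₁'.ne']
  apply ENNReal.ofReal_le_ofReal
  have key : Real.log (Real.sqrt r₁ / Real.sqrt r₀) ≤ Real.sqrt r₁ / Real.sqrt r₀ - 1 :=
    Real.log_le_sub_one_of_pos (by positivity)
  have hlog : Real.log (Real.sqrt r₁ / Real.sqrt r₀)
      = (Real.log r₁ - Real.log r₀) / 2 := by
    rw [Real.log_div (by positivity) (by positivity), Real.log_sqrt h₁, Real.log_sqrt h₀]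
    ring
  rw [hlog] at key
  have hmul := mul_le_mul_of_nonneg_left key (by positivity : (0:ℝ) ≤ 2 * r₀)
  have hr₀ : Real.sqrt r₀ * Real.sqrt r₀ = r₀ := Real.mul_self_sqrt h₀
  have hdiv : 2 * r₀ * (Real.sqrt r₁ / Real.sqrt r₀) = 2 * Real.sqrt r₀ * Real.sqrt r₁ := by
    field_simp; linear_combination -hr₀
  nlinarith [Real.sq_sqrt h₀, Real.sq_sqrt h₁]
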